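/- Suppose the block operator matrix L is a bijection of X^n. Then the operator I − G is a bijection of X, where G = Σ_{i=1}^n G_i. -/

import Mathlib

/-- Let `X` be a complex vector space, `n ≥ 1`, and for each `i`
let `G i : X → X` be linear with `I - G i` bijective, with reflection operators `Γ i`
defined by `I - Γ i = (I - G i)⁻¹`.  If the block operator matrix
`L : Xⁿ → Xⁿ`, `(L φ) i = φ i + Γ i (∑_{k ≠ i} φ k)`, is a bijection of `Xⁿ`,
then `I - G` is a bijection of `X`, where `G = ∑ i, G i`. -/
theorem stmt_0 {X : Type*} [AddCommGroup X] [Module ℂ X] (n : ℕ) (hn : 1 ≤ n)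
    (G Γ : Fin n → Module.End ℂ X)
    (hΓ : ∀ i, (1 - G i) * (1 - Γ i) = 1 ∧ (1 - Γ i) * (1 - G i) = 1)
    (hL : Function.Bijective (fun φ : Fin n → X =>
      fun i => φ i + Γ i (∑ k ∈ Finset.univ.erase i, φ k))) :
    Function.Bijective ⇑(1 - ∑ i, G i : Module.End ℂ X) := by
  -- operator identities
  have key1 : ∀ i, (1 - G i) * Γ i = -(G i) := by
    intro i
    have h := (hΓ i).1
    have e : (1 - G i) * Γ i = (1 - G i) - (1 - G i) * (1 - Γ i) := by noncomm_ring
    rw [e, h]; noncomm_ring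
  have key2 : ∀ i, Γ i * (1 - G i) = -(G i) := by
    intro i
    have h := (hΓ i).2
    have e : Γ i * (1 - G i) = (1 - G i) - (1 - Γ i) * (1 - G i) := by noncomm_ring
    rw [e, h]; noncomm_ring
  -- pointwise versions
  have pt1 : ∀ i (x : X), Γ i x - G i (Γ i x) = -(G i x) := by
    intro i x
    have := congrArg (fun f : Module.End ℂ X => f x) (key1 i)
    simpa [Module.End.mul_apply, LinearMap.sub_apply] using this
  have pt2 : ∀ i (x : X), Γ i (x - G i x) = -(G i x) := by
    intro i x
    have := congrArg (fun f : Module.End ℂ X => f x) (key2 i)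
    simpa [Module.End.mul_apply, LinearMap.sub_apply] using this
  have inv1 : ∀ i (w : X), (w - Γ i w) - G i (w - Γ i w) = w := by
    intro i w
    have := congrArg (fun f : Module.End ℂ X => f w) (hΓ i).1
    simpa [Module.End.mul_apply, LinearMap.sub_apply] using this
  constructor
  · -- injectivity
    refine (injective_iff_map_eq_zero (1 - ∑ i, G i : Module.End ℂ X)).mpr ?_
    intro x hx
    have hxs : x = ∑ i, G i x := by
      have hx' : x - ∑ i, G i x = 0 := by
        simpa [LinearMap.sub_apply, LinearMap.sum_apply] using hx
      exact sub_eq_zero.mp hx'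
    have hz : (fun i => G i x) = (fun _ : Fin n => (0 : X)) := by
      apply hL.injective
      funext i
      simp only
      rw [Finset.sum_erase_eq_sub (Finset.mem_univ i)]
      have hsum : (∑ k, G k x) = x := hxs.symm
      rw [hsum, pt2 i x]
      simp
    have hGi : ∀ i, G i x = 0 := fun i => congrFun hz i
    rw [hxs]
    simp [hGi]
  · -- surjectivity
    intro y
    obtain ⟨φ, hφ⟩ := hL.surjective (fun i => -(Γ i y))
    set S := ∑ k, φ k with hS
    refine ⟨S + y, ?_⟩
    have hφi : ∀ i, φ i = G i (S + y) := by
      intro i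
      have h1 : φ i + Γ i (S - φ i) = -(Γ i y) := by
        have := congrFun hφ i
        simpa [Finset.sum_erase_eq_sub (Finset.mem_univ i), ← hS] using this
      have h2 : Γ i (S + y - φ i) = -(φ i) := by
        have e : Γ i (S + y - φ i) = Γ i (S - φ i) + Γ i y := by
          rw [← map_add]; congr 1; abel
        have h3 : Γ i (S - φ i) = -(Γ i y) - φ i :=
          eq_sub_of_add_eq (by rw [add_comm]; exact h1)
        rw [e, h3]; abel
      have h4 : Γ i (S + y) = -(φ i) + Γ i (φ i) := by
        have e : S + y = (S + y - φ i) + φ i := by abel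
        rw [e, map_add, h2]
      have e1 : Γ i (S + y) - G i (Γ i (S + y)) = -(G i (S + y)) := pt1 i (S + y)
      rw [h4] at e1
      have e2 : (-(φ i) + Γ i (φ i)) - G i (-(φ i) + Γ i (φ i)) = -(φ i) := by
        have hneg : -(φ i) + Γ i (φ i) = -((φ i) - Γ i (φ i)) := by abel
        rw [hneg, map_neg]
        calc -((φ i) - Γ i (φ i)) - -(G i ((φ i) - Γ i (φ i)))
            = -(((φ i) - Γ i (φ i)) - G i ((φ i) - Γ i (φ i))) := by abel
          _ = -(φ i) := congrArg Neg.neg (inv1 i (φ i))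
      have h5 : -(G i (S + y)) = -(φ i) := by rw [← e1, e2]
      exact (neg_injective h5).symm
    have hsum : (∑ i, G i (S + y)) = S := by
      rw [hS]
      exact Finset.sum_congr rfl (fun i _ => (hφi i).symm)
    have : (1 - ∑ i, G i : Module.End ℂ X) (S + y) = (S + y) - ∑ i, G i (S + y) := by
      simp [LinearMap.sub_apply, LinearMap.sum_apply]
    rw [this, hsum]; abel
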